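/- There is no direct sum decomposition ℝ³ = V₁ ⊕ V₂ with V₁ ≠ {0} and V₂ ≠ {0} such that B(ξ₁, ξ₂, ξ₃, ξ₄) = 0 whenever the four arguments ξ₁, ξ₂, ξ₃, ξ₄ do not all lie in V₁ or all lie in V₂ (i.e. whenever B does not restrict to a direct sum B = B₁ ⊕ B₂). In other words, the affine model 𝒱 = (ℝ³, B) is irreducible. -/

import Mathlib

/-- wedge component on ℝ³: (u ∧ v)_{ab} = u_a v_b - u_b v_a. -/
def w3 (a b : Fin 3) (u v : Fin 3 → ℝ) : ℝ := u a * v b - u b * v a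

/-- The 4-linear form B on ℝ³ (standard basis X = e₀, Y = e₁, Z = e₂): antisymmetric
in its first two and in its last two arguments, symmetric under interchanging the two
pairs, and whose only nonzero components on basis vectors up to these symmetries are
given by B(X,Y,Z,X) = 1.  This is its explicit multilinear expression. -/
def B3 (ξ₁ ξ₂ ξ₃ ξ₄ : Fin 3 → ℝ) : ℝ :=
  -(w3 0 1 ξ₁ ξ₂ * w3 0 2 ξ₃ ξ₄ + w3 0 2 ξ₁ ξ₂ * w3 0 1 ξ₃ ξ₄)
/-- the affine model 𝒱 = (ℝ³, B) is irreducible: there is no direct sum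
decomposition ℝ³ = V₁ ⊕ V₂ with V₁ ≠ 0 and V₂ ≠ 0 such that B vanishes whenever its
four arguments do not all lie in V₁ or all lie in V₂. -/
theorem affine_model_irreducible :
    ¬ ∃ (V₁ V₂ : Submodule ℝ (Fin 3 → ℝ)), V₁ ≠ ⊥ ∧ V₂ ≠ ⊥ ∧
      V₁ ⊓ V₂ = ⊥ ∧ V₁ ⊔ V₂ = ⊤ ∧
      (∀ ξ₁ ξ₂ ξ₃ ξ₄ : Fin 3 → ℝ,
        ¬ ((ξ₁ ∈ V₁ ∧ ξ₂ ∈ V₁ ∧ ξ₃ ∈ V₁ ∧ ξ₄ ∈ V₁) ∨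
           (ξ₁ ∈ V₂ ∧ ξ₂ ∈ V₂ ∧ ξ₃ ∈ V₂ ∧ ξ₄ ∈ V₂)) →
        B3 ξ₁ ξ₂ ξ₃ ξ₄ = 0) := by
  rintro ⟨V₁, V₂, h₁, h₂, hinf, hsup, hB⟩
  -- membership in both spaces forces zero
  have hzero : ∀ x : Fin 3 → ℝ, x ∈ V₁ → x ∈ V₂ → x = 0 := by
    intro x hx1 hx2
    have : x ∈ V₁ ⊓ V₂ := Submodule.mem_inf.mpr ⟨hx1, hx2⟩
    rw [hinf] at this
    simpa using this
  -- key: for nonzero u ∈ V₁, nonzero v ∈ V₂, the wedge components vanish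
  have key : ∀ u v : Fin 3 → ℝ, u ∈ V₁ → v ∈ V₂ → u ≠ 0 → v ≠ 0 →
      u 0 * v 1 = u 1 * v 0 ∧ u 0 * v 2 = u 2 * v 0 := by
    intro u v hu hv hu0 hv0
    have hnv1 : v ∉ V₁ := fun h => hv0 (hzero v h hv)
    have hnu2 : u ∉ V₂ := fun h => hu0 (hzero u hu h)
    have hmix : ¬ ((u ∈ V₁ ∧ v ∈ V₁ ∧ (![0,0,1] : Fin 3 → ℝ) ∈ V₁ ∧ (![1,0,0] : Fin 3 → ℝ) ∈ V₁) ∨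
        (u ∈ V₂ ∧ v ∈ V₂ ∧ (![0,0,1] : Fin 3 → ℝ) ∈ V₂ ∧ (![1,0,0] : Fin 3 → ℝ) ∈ V₂)) := by
      rintro (⟨_, h, _, _⟩ | ⟨h, _, _, _⟩)
      · exact hnv1 h
      · exact hnu2 h
    have hmix' : ¬ ((u ∈ V₁ ∧ v ∈ V₁ ∧ (![1,0,0] : Fin 3 → ℝ) ∈ V₁ ∧ (![0,1,0] : Fin 3 → ℝ) ∈ V₁) ∨
        (u ∈ V₂ ∧ v ∈ V₂ ∧ (![1,0,0] : Fin 3 → ℝ) ∈ V₂ ∧ (![0,1,0] : Fin 3 → ℝ) ∈ V₂)) := by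
      rintro (⟨_, h, _, _⟩ | ⟨h, _, _, _⟩)
      · exact hnv1 h
      · exact hnu2 h
    have e1 := hB u v ![0,0,1] ![1,0,0] hmix
    have e2 := hB u v ![1,0,0] ![0,1,0] hmix'
    norm_num [B3, w3, Matrix.cons_val_zero, Matrix.cons_val_one, Matrix.cons_val_two, Matrix.head_cons, Matrix.tail_cons] at e1 e2
    constructor <;> linarith
  -- case A: some u ∈ V₁ has u 0 ≠ 0
  by_cases hA : ∃ u ∈ V₁, u 0 ≠ 0
  · obtain ⟨u, hu, hu0⟩ := hA
    have hune : u ≠ 0 := fun h => hu0 (by rw [h]; rfl)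
    obtain ⟨v, hv, hv0⟩ := Submodule.exists_mem_ne_zero_of_ne_bot h₂
    obtain ⟨k1, k2⟩ := key u v hu hv hune hv0
    have hv1 : v = (v 0 / u 0) • u := by
      funext i
      fin_cases i <;> simp [Pi.smul_apply, smul_eq_mul] <;> field_simp <;> linarith
    have : v ∈ V₁ := hv1 ▸ V₁.smul_mem _ hu
    exact hv0 (hzero v this hv)
  by_cases hA' : ∃ v ∈ V₂, v 0 ≠ 0
  · obtain ⟨v, hv, hv0⟩ := hA'
    have hvne : v ≠ 0 := fun h => hv0 (by rw [h]; rfl)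
    obtain ⟨u, hu, hu0⟩ := Submodule.exists_mem_ne_zero_of_ne_bot h₁
    obtain ⟨k1, k2⟩ := key u v hu hv hu0 hvne
    have hu1 : u = (u 0 / v 0) • v := by
      funext i
      fin_cases i <;> simp [Pi.smul_apply, smul_eq_mul] <;> field_simp <;> linarith
    have : u ∈ V₂ := hu1 ▸ V₂.smul_mem _ hv
    exact hu0 (hzero u hu this)
  -- case C: everything in V₁ ⊔ V₂ has vanishing 0-th coordinate
  push_neg at hA hA'
  have he : (![1,0,0] : Fin 3 → ℝ) ∈ V₁ ⊔ V₂ := hsup ▸ Submodule.mem_top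
  obtain ⟨a, ha, b, hb, hab⟩ := Submodule.mem_sup.mp he
  have := congrFun hab 0
  simp [hA a ha, hA' b hb] at this
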